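/- Let p > 3 be a prime with p ≡ 3 (mod 4) and ζ = e^{2πi/p}. Then ∏_{j=1}^{p-1} (1-ζ^{j²})/(1-ζ^j) = -1. -/
import Mathlib

open Finset Complex

theorem aux_root (p : ℕ) (hp : p.Prime) (hp3 : 3 < p)
    (hpmod : p % 4 = 3) (ζ : ℂ) (hprim : IsPrimitiveRoot ζ p) :
    ∏ j ∈ Finset.Icc 1 (p - 1), (1 - ζ ^ (j ^ 2)) / (1 - ζ ^ j) = -1 := by
  haveI : Fact p.Prime := ⟨hp⟩
  haveI : NeZero p := ⟨hp.ne_zero⟩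
  set U : Finset (ZMod p) := Finset.univ.erase 0 with hUdef
  set g : ZMod p → ℂ := fun x => 1 - ζ ^ x.val with hgdef
  set S : Finset (ZMod p) := U.image (· ^ 2) with hSdef
  -- power reduction
  have h1 : ∀ n : ℕ, ζ ^ n = ζ ^ ((n : ZMod p)).val := by
    intro n
    conv_lhs => rw [← Nat.div_add_mod n p]
    rw [pow_add, pow_mul, hprim.pow_eq_one, one_pow, one_mul, ZMod.val_natCast]
  -- product reindexing
  have hbij : ∀ f : ZMod p → ℂ, ∏ x ∈ U, f x = ∏ j ∈ Finset.Icc 1 (p - 1), f (j : ℕ) := by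
    intro f
    refine Finset.prod_nbij' (fun x => x.val) (fun n => (n : ZMod p)) ?_ ?_ ?_ ?_ ?_
    · intro x hx
      simp only [hUdef, Finset.mem_erase] at hx
      have h1 : x.val ≠ 0 := fun h => hx.1 (by rwa [← ZMod.val_eq_zero])
      have h2 : x.val < p := ZMod.val_lt x
      simp only [Finset.mem_Icc]; omega
    · intro j hj
      simp only [Finset.mem_Icc] at hj
      have : ((j : ZMod p)).val = j := ZMod.val_cast_of_lt (by omega)
      simp only [hUdef, Finset.mem_erase, Finset.mem_univ, and_true]
      intro h; rw [h, ZMod.val_zero] at this; omega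
    · intro x _; simp only [ZMod.natCast_val, ZMod.cast_id]
    · intro j hj
      simp only [Finset.mem_Icc] at hj
      exact ZMod.val_cast_of_lt (by omega)
    · intro x _; simp only [ZMod.natCast_val, ZMod.cast_id]
  -- membership in S
  have hmemS : ∀ s : ZMod p, s ∈ S ↔ ∃ x : ZMod p, x ≠ 0 ∧ x ^ 2 = s := by
    intro s
    simp only [hSdef, Finset.mem_image, hUdef, Finset.mem_erase, Finset.mem_univ, and_true]
  have hS_sub : S ⊆ U := by
    intro s hs
    rw [hmemS] at hs
    obtain ⟨x, hx, rfl⟩ := hs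
    simp only [hUdef, Finset.mem_erase, Finset.mem_univ, and_true]
    exact pow_ne_zero 2 hx
  have hSne : ∀ s ∈ S, s ≠ 0 := by
    intro s hs
    have := hS_sub hs
    simp only [hUdef, Finset.mem_erase] at this
    exact this.1
  -- -1 is not a square
  have hnegone : ¬ IsSquare (-1 : ZMod p) := by
    rw [ZMod.exists_sq_eq_neg_one_iff]
    simp [hpmod]
  have hnegS : ∀ s ∈ S, -s ∉ S := by
    intro s hs hns
    rw [hmemS] at hs hns
    obtain ⟨a, ha, rfl⟩ := hs
    obtain ⟨b, hb, hb2⟩ := hns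
    apply hnegone
    refine ⟨b * a⁻¹, ?_⟩
    have ha2 : (a : ZMod p) ^ 2 ≠ 0 := pow_ne_zero 2 ha
    field_simp
    linear_combination -hb2
  -- closure of S
  have hmulS : ∀ s ∈ S, ∀ t ∈ S, s * t ∈ S := by
    intro s hs t ht
    rw [hmemS] at hs ht ⊢
    obtain ⟨a, ha, rfl⟩ := hs
    obtain ⟨b, hb, rfl⟩ := ht
    exact ⟨a * b, mul_ne_zero ha hb, by ring⟩
  have hinvS : ∀ s ∈ S, s⁻¹ ∈ S := by
    intro s hs
    rw [hmemS] at hs ⊢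
    obtain ⟨a, ha, rfl⟩ := hs
    exact ⟨a⁻¹, inv_ne_zero ha, by rw [← inv_pow]⟩
  -- every nonzero element: itself or its negation is in S
  have hsq : ∀ x : ZMod p, x ≠ 0 → x ∈ S ∨ -x ∈ S := by
    intro x hx
    have hcard : (x ^ (p / 2)) ^ 2 = 1 := by
      rw [← pow_mul]
      have : p / 2 * 2 = p - 1 := by omega
      rw [this, ZMod.pow_card_sub_one_eq_one hx]
    have : (x ^ (p / 2) - 1) * (x ^ (p / 2) + 1) = 0 := by linear_combination hcard
    rcases mul_eq_zero.mp this with h | h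
    · left
      obtain ⟨y, hy⟩ := (ZMod.euler_criterion p hx).mpr (sub_eq_zero.mp h)
      rw [hmemS]
      exact ⟨y, fun h0 => hx (by rw [hy, h0, mul_zero]), by rw [hy]; ring⟩
    · right
      have hodd : Odd (p / 2) := by
        rcases Nat.even_or_odd (p / 2) with he | ho
        · exfalso; obtain ⟨k, hk⟩ := he; omega
        · exact ho
      have hneg : (-x) ^ (p / 2) = 1 := by
        rw [neg_pow, hodd.neg_one_pow, eq_neg_of_add_eq_zero_left h]; ring
      obtain ⟨y, hy⟩ := (ZMod.euler_criterion p (neg_ne_zero.mpr hx)).mpr hneg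
      rw [hmemS]
      exact ⟨y, fun h0 => hx (by simpa [h0] using hy.symm), by rw [hy]; ring⟩
  -- U splits as S ∪ -S
  have hUeq : U = S ∪ S.image (fun s => -s) := by
    apply Finset.ext
    intro x
    simp only [Finset.mem_union, Finset.mem_image]
    constructor
    · intro hx
      have hx0 : x ≠ 0 := by
        simp only [hUdef, Finset.mem_erase] at hx; exact hx.1
      rcases hsq x hx0 with h | h
      · exact Or.inl h
      · exact Or.inr ⟨-x, h, neg_neg x⟩
    · rintro (h | ⟨s, hs, rfl⟩)
      · exact hS_sub h
      · simp only [hUdef, Finset.mem_erase, Finset.mem_univ, and_true]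
        exact neg_ne_zero.mpr (hSne s hs)
  have hdisj : Disjoint S (S.image (fun s => -s)) := by
    rw [Finset.disjoint_left]
    rintro t ht hti
    simp only [Finset.mem_image] at hti
    obtain ⟨s, hs, rfl⟩ := hti
    exact hnegS s hs ht
  -- cardinality of S is odd
  have hcardU : U.card = p - 1 := by
    rw [hUdef, Finset.card_erase_of_mem (Finset.mem_univ 0), Finset.card_univ, ZMod.card]
  have hcardS : Odd S.card := by
    have h2 : U.card = S.card + (S.image (fun s => -s)).card := by
      rw [hUeq, Finset.card_union_of_disjoint hdisj]
    rw [Finset.card_image_of_injective _ neg_injective, hcardU] at h2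
    exact ⟨(p - 3) / 4, by omega⟩
  -- sum over S is zero
  have hsum : (∑ s ∈ S, s) = 0 := by
    have h2ne : (2 : ZMod p) ≠ 0 := by
      intro h
      have h2 : ((2 : ℕ) : ZMod p) = 0 := by exact_mod_cast h
      have := Nat.le_of_dvd (by norm_num) ((ZMod.natCast_eq_zero_iff 2 p).mp h2)
      omega
    have h4S : (4 : ZMod p) ∈ S := by
      rw [hmemS]; exact ⟨2, h2ne, by norm_num⟩
    have h4ne : (4 : ZMod p) ≠ 0 := hSne _ h4S
    have h4ne1 : (4 : ZMod p) ≠ 1 := by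
      intro h
      have h3 : ((3 : ℕ) : ZMod p) = 0 := by push_cast; linear_combination h
      have := Nat.le_of_dvd (by norm_num) ((ZMod.natCast_eq_zero_iff 3 p).mp h3)
      omega
    have hstep : ∑ s ∈ S, (4 : ZMod p) * s = ∑ s ∈ S, s := by
      refine Finset.sum_nbij' (fun s => (4 : ZMod p) * s) (fun s => (4 : ZMod p)⁻¹ * s) ?_ ?_ ?_ ?_ ?_
      · intro s hs; exact hmulS _ h4S _ hs
      · intro s hs; exact hmulS _ (hinvS _ h4S) _ hs
      · intro s _; field_simp
      · intro s _; field_simp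
      · intro s _; rfl
    rw [← Finset.mul_sum] at hstep
    have hz : ((4 : ZMod p) - 1) * ∑ s ∈ S, s = 0 := by linear_combination hstep
    rcases mul_eq_zero.mp hz with h | h
    · exact absurd (by linear_combination h) h4ne1
    · exact h
  -- ζ to the sum power
  have hzpow : ζ ^ (∑ s ∈ S, (p - s.val)) = 1 := by
    have hdvd : p ∣ ∑ s ∈ S, (p - s.val) := by
      rw [← ZMod.natCast_eq_zero_iff]
      push_cast
      have hterm : ∀ s ∈ S, ((p - s.val : ℕ) : ZMod p) = -s := by
        intro s hs
        rw [Nat.cast_sub (le_of_lt (ZMod.val_lt s))]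
        simp [ZMod.natCast_val, ZMod.cast_id]
      rw [Finset.sum_congr rfl hterm, Finset.sum_neg_distrib, hsum, neg_zero]
    obtain ⟨c, hc⟩ := hdvd
    rw [hc, pow_mul, hprim.pow_eq_one, one_pow]
  -- g of negation
  have hgneg : ∀ s ∈ S, g (-s) = -ζ ^ (p - s.val) * g s := by
    intro s hs
    have hs0 : s ≠ 0 := hSne s hs
    have hval : (-s).val = p - s.val := by rw [ZMod.neg_val, if_neg hs0]
    have hkey : ζ ^ (p - s.val) * ζ ^ s.val = 1 := by
      rw [← pow_add, Nat.sub_add_cancel (le_of_lt (ZMod.val_lt s)), hprim.pow_eq_one]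
    simp only [hgdef, hval]
    linear_combination -hkey
  -- denominator
  have hden : ∏ j ∈ Finset.Icc 1 (p - 1), (1 - ζ ^ j) = (p : ℂ) := by
    obtain ⟨n, rfl⟩ : ∃ n, p = n + 1 := ⟨p - 1, by omega⟩
    have hthis := hprim.prod_one_sub_pow_eq_order
    rw [show n + 1 - 1 = n from rfl, ← Finset.Ico_add_one_right_eq_Icc, Finset.prod_Ico_eq_prod_range]
    push_cast
    rw [← hthis]
    exact Finset.prod_congr rfl fun k _ => by rw [add_comm]
  -- product over U of g equals p
  have hU : ∏ x ∈ U, g x = (p : ℂ) := by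
    rw [hbij g, ← hden]
    refine Finset.prod_congr rfl fun j _ => ?_
    simp only [hgdef]
    rw [← h1]
  -- squaring is a bijection on S
  have hsqbij : ∏ s ∈ S, g (s ^ 2) = ∏ s ∈ S, g s := by
    refine Finset.prod_bij (fun s _ => s ^ 2) ?_ ?_ ?_ ?_
    · intro s hs
      have := hmulS s hs s hs; rwa [← sq] at this
    · intro a ha b hb hab
      have hz : (a - b) * (a + b) = 0 := by linear_combination hab
      rcases mul_eq_zero.mp hz with h | h
      · exact sub_eq_zero.mp h
      · exact absurd (eq_neg_of_add_eq_zero_left h ▸ ha) (hnegS b hb)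
    · intro y hy
      rw [hmemS] at hy
      obtain ⟨x, hx, rfl⟩ := hy
      rcases hsq x hx with h | h
      · exact ⟨x, h, rfl⟩
      · exact ⟨-x, h, by ring⟩
    · intro s _; rfl
  -- numerator over U
  have hA : ∏ x ∈ U, g (x ^ 2) = (∏ s ∈ S, g s) ^ 2 := by
    rw [hUeq, Finset.prod_union hdisj,
      Finset.prod_image (fun a _ b _ h => neg_injective h)]
    have : ∀ s ∈ S, g ((-s) ^ 2) = g (s ^ 2) := fun s _ => by rw [neg_sq]
    rw [Finset.prod_congr rfl this, hsqbij, sq]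
  -- the split product identity : p = -A^2
  have hP : (p : ℂ) = -(∏ s ∈ S, g s) ^ 2 := by
    rw [← hU, hUeq, Finset.prod_union hdisj,
      Finset.prod_image (fun a _ b _ h => neg_injective h),
      Finset.prod_congr rfl hgneg, Finset.prod_mul_distrib]
    have hmain : ∏ s ∈ S, (-ζ ^ (p - s.val)) = -1 := by
      calc ∏ s ∈ S, (-ζ ^ (p - s.val)) = ∏ s ∈ S, ((-1 : ℂ) * ζ ^ (p - s.val)) := by
            exact Finset.prod_congr rfl fun s _ => by ring
        _ = (-1) ^ S.card * ζ ^ (∑ s ∈ S, (p - s.val)) := by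
            rw [Finset.prod_mul_distrib, Finset.prod_const, Finset.prod_pow_eq_pow_sum]
        _ = -1 := by rw [hzpow, hcardS.neg_one_pow, mul_one]
    rw [hmain]; ring
  -- conclusion
  have hnum : ∏ j ∈ Finset.Icc 1 (p - 1), (1 - ζ ^ (j ^ 2)) = (∏ s ∈ S, g s) ^ 2 := by
    rw [← hA, hbij (fun x => g (x ^ 2))]
    refine Finset.prod_congr rfl fun j _ => ?_
    simp only [hgdef]
    have hc : ((j : ℕ) : ZMod p) ^ 2 = ((j ^ 2 : ℕ) : ZMod p) := by push_cast; ring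
    rw [hc, ← h1]
  have hpne : (p : ℂ) ≠ 0 := Nat.cast_ne_zero.mpr hp.ne_zero
  rw [Finset.prod_div_distrib, hnum, hden, div_eq_iff hpne]
  linear_combination hP

theorem root_of_unity_product_three_mod_four (p : ℕ) (hp : p.Prime) (hp3 : 3 < p)
    (hpmod : p % 4 = 3) (ζ : ℂ) (hζ : ζ = Complex.exp (2 * Real.pi * Complex.I / p)) :
    ∏ j ∈ Finset.Icc 1 (p - 1), (1 - ζ ^ (j ^ 2)) / (1 - ζ ^ j) = -1 := by
  have hprim : IsPrimitiveRoot ζ p := by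
    rw [hζ]; exact Complex.isPrimitiveRoot_exp p hp.ne_zero
  exact aux_root p hp hp3 hpmod ζ hprim
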